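/- Let x, y ∈ 𝒪 with y ≠ 0, and write V(a,b) = (a, b, a*b; n(b), n(a), 1) ∈ 𝒪³×ℝ³ for the Veronese image of an affine point (a,b). Then the cyclic permutation of the Veronese image of (x,y) is a positive real multiple of the Veronese image of the point (n(y)⁻¹·y, n(y)⁻¹·(x*y)): explicitly, (y, x*y, x; n(x), 1, n(y)) = n(y)·V(n(y)⁻¹·y, n(y)⁻¹·(x*y)). In particular the triality collineation permuting Veronese coordinates acts on affine points with y ≠ 0 by (x,y) ↦ n(y)⁻¹·(y, x*y). -/

import Mathlib

open Matrix Complex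

noncomputable section

/-- `3 × 3` complex matrices. -/
abbrev M3 : Type := Matrix (Fin 3) (Fin 3) ℂ

/-- The real Okubo algebra: `3 × 3` traceless Hermitian complex matrices. -/
def Okubo : Set M3 := {x | x.IsHermitian ∧ x.trace = 0}

/-- The constant `μ = (3 + i√3)/6`. -/
def okMu : ℂ := (3 + (Real.sqrt 3 : ℂ) * Complex.I) / 6

/-- The Okubo product `x*y = μ·(xy) + μ̄·(yx) − (1/3)Tr(xy)·Id`. -/
def omul (x y : M3) : M3 :=
  okMu • (x * y) + (starRingEnd ℂ) okMu • (y * x) - ((1 / 3 : ℂ) * (x * y).trace) • (1 : M3)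

/-- The Okubic norm `n(x) = (1/6)Tr(x²)` (real-valued on Hermitian matrices). -/
def onorm (x : M3) : ℝ := (1 / 6) * ((x * x).trace).re

/-- The polar form `⟨x,y⟩ = n(x+y) − n(x) − n(y)` of the Okubic norm. -/
def opolar (x y : M3) : ℝ := onorm (x + y) - onorm x - onorm y


/-- The Veronese image `V(a,b) = (a, b, a*b; n(b), n(a), 1)` of an affine point. -/
def okVer (a b : M3) : (M3 × M3 × M3) × (ℝ × ℝ × ℝ) :=
  ((a, b, omul a b), (onorm b, onorm a, 1))

theorem okubo_hconj : (starRingEnd ℂ) okMu = (3 - (Real.sqrt 3 : ℂ) * Complex.I) / 6 := by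
  rw [okMu, map_div₀, map_add, map_mul (starRingEnd ℂ), Complex.conj_I, Complex.conj_ofReal,
    map_ofNat, map_ofNat]
  ring

theorem okubo_hmu1 : okMu + (starRingEnd ℂ) okMu = 1 := by
  rw [okubo_hconj, okMu]; ring

theorem okubo_hmu2 : okMu * (starRingEnd ℂ) okMu = 1/3 := by
  have hs : ((Real.sqrt 3 : ℝ) : ℂ)^2 = 3 := by
    norm_cast; rw [Real.sq_sqrt]; norm_num
  rw [okubo_hconj, okMu]
  linear_combination (-(((Real.sqrt 3:ℝ):ℂ)^2)/36) * Complex.I_sq + (1/36) * hs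

/-- Polarized Cayley–Hamilton identity for traceless `3×3` matrices. -/
theorem okubo_keyA (x y : M3) (hx : x.trace = 0) (hy : y.trace = 0) :
    y*x*y + y*y*x + x*y*y
      = (((y*y).trace)/2) • x + ((x*y).trace) • y + ((x*y*y).trace) • (1:M3) := by
  have hx2 : x 2 2 = -(x 0 0 + x 1 1) := by
    simp [Matrix.trace, Fin.sum_univ_three, Matrix.diag] at hx; linear_combination hx
  have hy2 : y 2 2 = -(y 0 0 + y 1 1) := by
    simp [Matrix.trace, Fin.sum_univ_three, Matrix.diag] at hy; linear_combination hy
  ext i j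
  fin_cases i <;> fin_cases j <;>
    simp [Matrix.mul_apply, Fin.sum_univ_three, Matrix.trace, Matrix.diag,
      Matrix.one_apply, hx2, hy2] <;> ring

/-- Trace identity for traceless `3×3` matrices. -/
theorem okubo_keyT (x y : M3) (hx : x.trace = 0) (hy : y.trace = 0) :
    (x*y*(x*y)).trace + 2*(x*x*(y*y)).trace
      = (1/2)*(x*x).trace*(y*y).trace + ((x*y).trace)^2 := by
  have hx2 : x 2 2 = -(x 0 0 + x 1 1) := by
    simp [Matrix.trace, Fin.sum_univ_three, Matrix.diag] at hx; linear_combination hx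
  have hy2 : y 2 2 = -(y 0 0 + y 1 1) := by
    simp [Matrix.trace, Fin.sum_univ_three, Matrix.diag] at hy; linear_combination hy
  simp [Matrix.mul_apply, Fin.sum_univ_three, Matrix.trace, Matrix.diag, hx2, hy2]
  ring

/-- `y*(x*y) = n(y)·x` (at the level of complex traces). -/
theorem okubo_keyB (x y : M3) (hx : x.trace = 0) (hy : y.trace = 0) :
    omul y (omul x y) = (((y*y).trace)/6) • x := by
  have hA := okubo_keyA x y hx hy
  rw [mul_assoc x y y, mul_assoc y x y, mul_assoc y y x] at hA
  have e1 : (y*(x*y)).trace = (x*(y*y)).trace := by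
    rw [trace_mul_comm, mul_assoc]
  have e2 : (y*(y*x)).trace = (x*(y*y)).trace := by
    rw [← mul_assoc, trace_mul_comm]
  have e3 : (y*x).trace = (x*y).trace := trace_mul_comm _ _
  simp only [omul, mul_add, add_mul, mul_sub, sub_mul, smul_mul_assoc, mul_smul_comm,
    smul_smul, mul_one, one_mul, trace_add, trace_sub, trace_smul, trace_one, mul_assoc,
    e1, e2, e3, hy]
  set s := (y*y).trace with hsdef
  set t1 := (x*y).trace with ht1
  set t2 := (x*(y*y)).trace with ht2
  have h3 : x*(y*y) = (s/2) • x + t1 • y + t2 • (1:M3) - y*(x*y) - y*(y*x) := by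
    linear_combination (norm := module) hA
  rw [h3]
  match_scalars
  · linear_combination (okMu + (starRingEnd ℂ) okMu + 1) * okubo_hmu1 - 3 * okubo_hmu2
  · ring
  · linear_combination t1 * okubo_hmu2 - t1/3 * okubo_hmu1
  · linear_combination (s/2) * okubo_hmu2
  · simp only [smul_eq_mul]
    linear_combination t2 * okubo_hmu2 - t2/3 * okubo_hmu1

/-- Multiplicativity of the norm at the level of complex traces. -/
theorem okubo_keyC (x y : M3) (hx : x.trace = 0) (hy : y.trace = 0) :
    ((omul x y) * (omul x y)).trace = (x*x).trace * (y*y).trace / 6 := by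
  have hT := okubo_keyT x y hx hy
  rw [mul_assoc x y (x*y), mul_assoc x x (y*y)] at hT
  have cBB : (y*(x*(y*x))).trace = (x*(y*(x*y))).trace := by
    rw [trace_mul_comm y (x*(y*x)), mul_assoc, mul_assoc]
  have cAB : (x*(y*(y*x))).trace = (x*(x*(y*y))).trace := by
    rw [← mul_assoc y y x, ← mul_assoc x (y*y) x, trace_mul_comm]
  have cBA : (y*(x*(x*y))).trace = (x*(x*(y*y))).trace := by
    rw [← mul_assoc x x y, ← mul_assoc y (x*x) y, trace_mul_comm,
      ← mul_assoc y y (x*x), trace_mul_comm, mul_assoc]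
  have e3 : (y*x).trace = (x*y).trace := trace_mul_comm _ _
  simp only [omul, mul_add, add_mul, mul_sub, sub_mul, smul_mul_assoc, mul_smul_comm,
    smul_smul, mul_one, one_mul, trace_add, trace_sub, trace_smul, trace_one,
    smul_eq_mul, mul_assoc, Fintype.card_fin, cBB, cAB, cBA, e3]
  set T1 := (x*(y*(x*y))).trace
  set T2 := (x*(x*(y*y))).trace
  set t1 := (x*y).trace
  linear_combination (1/3)*hT
    + ((okMu + (starRingEnd ℂ) okMu + 1)*T1 - (2/3)*t1^2)*okubo_hmu1
    + (2*T2 - 2*T1)*okubo_hmu2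

theorem okubo_rsmul (r : ℝ) (M : M3) : r • M = ((r : ℂ)) • M := by
  rw [← smul_one_smul ℂ r M, Complex.real_smul, mul_one]

theorem okubo_trace_sq (x : M3) (hx : x.IsHermitian) :
    (x*x).trace = ((∑ i, ∑ j, Complex.normSq (x i j) : ℝ) : ℂ) := by
  have hh : ∀ i j, x j i = (starRingEnd ℂ) (x i j) := by
    intro i j
    have h2 : star (x j i) = x i j := by rw [← Matrix.conjTranspose_apply, hx]
    rw [← h2]
    exact (star_star _).symm
  simp only [Matrix.trace, Matrix.diag, Matrix.mul_apply]
  push_cast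
  refine Finset.sum_congr rfl fun i _ => Finset.sum_congr rfl fun j _ => ?_
  rw [hh i j, Complex.mul_conj]

theorem okubo_onorm_pos (y : M3) (hy : y.IsHermitian) (h0 : y ≠ 0) : 0 < onorm y := by
  have ht : onorm y = (1/6) * ∑ i, ∑ j, Complex.normSq (y i j) := by
    rw [onorm, okubo_trace_sq y hy, Complex.ofReal_re]
  obtain ⟨i, j, hij⟩ : ∃ i j, y i j ≠ 0 := by
    by_contra h; push_neg at h
    exact h0 (by ext i j; simp [h])
  have hpos : 0 < ∑ i, ∑ j, Complex.normSq (y i j) := by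
    refine Finset.sum_pos'
      (fun i _ => Finset.sum_nonneg fun j _ => Complex.normSq_nonneg _)
      ⟨i, Finset.mem_univ i, Finset.sum_pos'
        (fun j _ => Complex.normSq_nonneg _)
        ⟨j, Finset.mem_univ j, Complex.normSq_pos.mpr hij⟩⟩
  rw [ht]; linarith

theorem okubo_trace_real (x : M3) (hx : x.IsHermitian) :
    (x*x).trace = ((onorm x : ℝ) : ℂ) * 6 := by
  rw [onorm, okubo_trace_sq x hx, Complex.ofReal_re]
  push_cast
  ring

theorem okubo_omul_smul_left (c : ℂ) (a b : M3) : omul (c • a) b = c • omul a b := by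
  simp only [omul, smul_mul_assoc, mul_smul_comm, trace_smul, smul_eq_mul, smul_sub,
    smul_add, smul_smul]
  match_scalars <;> ring

theorem okubo_omul_smul_right (c : ℂ) (a b : M3) : omul a (c • b) = c • omul a b := by
  simp only [omul, smul_mul_assoc, mul_smul_comm, trace_smul, smul_eq_mul, smul_sub,
    smul_add, smul_smul]
  match_scalars <;> ring

theorem okubo_omul_rsmul_left (r : ℝ) (a b : M3) : omul (r • a) b = r • omul a b := by
  rw [okubo_rsmul, okubo_rsmul, okubo_omul_smul_left]

theorem okubo_omul_rsmul_right (r : ℝ) (a b : M3) : omul a (r • b) = r • omul a b := by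
  rw [okubo_rsmul, okubo_rsmul r, okubo_omul_smul_right]

theorem okubo_onorm_smul (r : ℝ) (M : M3) : onorm (r • M) = r^2 * onorm M := by
  rw [onorm, onorm, okubo_rsmul, smul_mul_assoc, mul_smul_comm, smul_smul, trace_smul,
    smul_eq_mul]
  rw [show ((r:ℂ) * (r:ℂ)) = ((r^2 : ℝ) : ℂ) by push_cast; ring, Complex.re_ofReal_mul]
  ring

theorem okubo_onorm_mul (x y : M3) (hx : x ∈ Okubo) (hy : y ∈ Okubo) :
    onorm (omul x y) = onorm x * onorm y := by
  rw [onorm, okubo_keyC x y hx.2 hy.2, okubo_trace_real x hx.1, okubo_trace_real y hy.1]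
  rw [show ((onorm x : ℂ) * 6 * ((onorm y : ℂ) * 6) / 6)
      = (((onorm x * onorm y * 6 : ℝ)) : ℂ) by push_cast; ring, Complex.ofReal_re]
  ring

/-- `y*(x*y) = n(y) • x`, with the real scalar. -/
theorem okubo_keyB' (x y : M3) (hx : x ∈ Okubo) (hy : y ∈ Okubo) :
    omul y (omul x y) = (onorm y : ℝ) • x := by
  rw [okubo_keyB x y hx.2 hy.2, okubo_rsmul, okubo_trace_real y hy.1]
  congr 1
  ring

/-- For `x, y ∈ 𝒪` with `y ≠ 0`, the cyclic permutation of the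
Veronese image of `(x,y)` is the positive real multiple (by `n(y) > 0`) of the
Veronese image of the point `(n(y)⁻¹ • y, n(y)⁻¹ • (x*y))`; in particular the
triality collineation acts on affine points with `y ≠ 0` by
`(x,y) ↦ n(y)⁻¹ • (y, x*y)`. -/
theorem okubo_paper_stmt17 (x y : M3) (hx : x ∈ Okubo) (hy : y ∈ Okubo)
    (hy0 : y ≠ 0) :
    0 < onorm y ∧
    ((y, omul x y, x), (onorm x, (1 : ℝ), onorm y)) =
      onorm y • okVer ((onorm y)⁻¹ • y) ((onorm y)⁻¹ • omul x y) := by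
  have hn : 0 < onorm y := okubo_onorm_pos y hy.1 hy0
  have hn0 : onorm y ≠ 0 := ne_of_gt hn
  refine ⟨hn, ?_⟩
  simp only [okVer, Prod.smul_mk, Prod.mk.injEq, smul_eq_mul]
  refine ⟨⟨(smul_inv_smul₀ hn0 y).symm, (smul_inv_smul₀ hn0 (omul x y)).symm, ?_⟩,
    ?_, ?_, (mul_one _).symm⟩
  · rw [okubo_omul_rsmul_left, okubo_omul_rsmul_right, okubo_keyB' x y hx hy,
      smul_smul, smul_smul, smul_smul]
    rw [show onorm y * (onorm y)⁻¹ * (onorm y)⁻¹ * onorm y = 1 by field_simp, one_smul]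
  · rw [okubo_onorm_smul, okubo_onorm_mul x y hx hy]
    field_simp
  · rw [okubo_onorm_smul]
    field_simp

end
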